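/- There is an absolute constant C > 0 such that the following holds: let δ ∈ [0,1/4], let S : [0,1] → [0,1] be a continuous, strictly increasing bijection, differentiable on (0,1), with |S(r) − r| ≤ δ·r(1−r) for all r ∈ [0,1] and |S'(r) − 1| ≤ δ for all r ∈ (0,1); let T = S^{-1}; let a ∈ C[0,1] be continuously differentiable on (0,1) with ‖a‖₁ := sup_{0<r<1} r(1−r)|a'(r)| < ∞. Define, for q ∈ C[0,1], L(q)(r) = r^{-3}∫₀^r a(ρ)q(ρ)ρ² dρ for 0 < r ≤ 1 (with L(q)(0) = a(0)q(0)/3), and L̃(q)(r̄) = S(r̄)^{-3}∫₀^{S(r̄)} a(ρ)q(T(ρ))ρ² dρ for 0 < r̄ ≤ 1 (with L̃(q)(0) = a(0)q(0)/3). Then for every q ∈ C[0,1], max_{0≤r̄≤1} |L̃(q)(r̄) − L(q)(r̄)| ≤ C·(‖a‖_∞ + ‖a‖₁)·δ·‖q‖_∞. -/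

import Mathlib

set_option maxHeartbeats 4000000

open Set MeasureTheory intervalIntegral

section Aux

lemma aux_inv_cont (S T : ℝ → ℝ)
    (hS : ContinuousOn S (Set.Icc 0 1))
    (hmaps : ∀ r ∈ Set.Icc (0:ℝ) 1, S r ∈ Set.Icc (0:ℝ) 1)
    (hTS : ∀ r ∈ Set.Icc (0:ℝ) 1, T (S r) = r)
    (hST : ∀ r ∈ Set.Icc (0:ℝ) 1, S (T r) = r)
    (hTmaps : ∀ r ∈ Set.Icc (0:ℝ) 1, T r ∈ Set.Icc (0:ℝ) 1) :
    ContinuousOn T (Set.Icc 0 1) := by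
  haveI : CompactSpace (Set.Icc (0:ℝ) 1) := isCompact_iff_compactSpace.mp isCompact_Icc
  let e : (Set.Icc (0:ℝ) 1) ≃ (Set.Icc (0:ℝ) 1) :=
    { toFun := fun x => ⟨S x, hmaps x x.2⟩
      invFun := fun x => ⟨T x, hTmaps x x.2⟩
      left_inv := fun x => Subtype.ext (hTS x x.2)
      right_inv := fun x => Subtype.ext (hST x x.2) }
  have hcont : Continuous e := Continuous.subtype_mk hS.restrict _
  have hsymm : Continuous e.symm := hcont.continuous_symm_of_equiv_compact_to_t2
  rw [continuousOn_iff_continuous_restrict]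
  exact continuous_subtype_val.comp hsymm


lemma aux_a_diff (a a' : ℝ → ℝ) (N₁ δ : ℝ)
    (ha : ContinuousOn a (Set.Icc 0 1))
    (had : ∀ r ∈ Set.Ioo (0:ℝ) 1, HasDerivAt a (a' r) r)
    (hN₁ : ∀ r ∈ Set.Ioo (0:ℝ) 1, r * (1 - r) * |a' r| ≤ N₁)
    (hδ0 : 0 ≤ δ) (hδ4 : δ ≤ 1/4) (hN : 0 ≤ N₁)
    {t s : ℝ} (ht : t ∈ Set.Ioo (0:ℝ) 1) (hs : s ∈ Set.Ioo (0:ℝ) 1)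
    (hlo : t - δ * (t * (1 - t)) ≤ s) (hhi : s ≤ t + δ * (t * (1 - t))) :
    |a s - a t| ≤ 2 * (δ * N₁) := by
  obtain ⟨ht0, ht1⟩ := ht
  obtain ⟨hs0, hs1⟩ := hs
  have hδt : δ * t ≤ 1/4 := by nlinarith
  rcases lt_trichotomy s t with h | h | h
  · obtain ⟨c, hc, hceq⟩ := exists_hasDerivAt_eq_slope a a' h
      (ha.mono (Icc_subset_Icc hs0.le ht1.le))
      (fun x hx => had x ⟨lt_trans hs0 hx.1, lt_trans hx.2 ht1⟩)
    have hc01 : c ∈ Set.Ioo (0:ℝ) 1 := ⟨lt_trans hs0 hc.1, lt_trans hc.2 ht1⟩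
    have hb := hN₁ c hc01
    have heq : a' c * (t - s) = a t - a s := by
      rw [hceq]; exact div_mul_cancel₀ _ (sub_ne_zero.mpr (ne_of_gt h))
    have h1 : |a s - a t| = |a' c| * (t - s) := by
      rw [abs_sub_comm, ← heq, abs_mul, abs_of_pos (by linarith : (0:ℝ) < t - s)]
    have habs : 0 ≤ |a' c| := abs_nonneg _
    have h34 : 3/4 * t ≤ c := by
      nlinarith [hc.1, mul_le_mul_of_nonneg_right hδ4
        (mul_nonneg ht0.le (by linarith : (0:ℝ) ≤ 1 - t)), sq_nonneg t,
        mul_nonneg hδ0 (sq_nonneg t)]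
    have hcc : 3/4 * (t * (1 - t)) ≤ c * (1 - c) := by
      nlinarith [mul_le_mul h34 (by linarith [hc.2] : (1:ℝ) - t ≤ 1 - c)
        (by linarith : (0:ℝ) ≤ 1 - t) (by linarith : (0:ℝ) ≤ c)]
    have h2 : t * (1 - t) * |a' c| ≤ 4/3 * N₁ := by
      nlinarith [mul_le_mul_of_nonneg_right hcc habs]
    rw [h1]
    calc |a' c| * (t - s) ≤ |a' c| * (δ * (t * (1 - t))) :=
          mul_le_mul_of_nonneg_left (by linarith) habs
      _ = δ * (t * (1 - t) * |a' c|) := by ring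
      _ ≤ δ * (4/3 * N₁) := mul_le_mul_of_nonneg_left h2 hδ0
      _ ≤ 2 * (δ * N₁) := by nlinarith
  · simp [h]; positivity
  · obtain ⟨c, hc, hceq⟩ := exists_hasDerivAt_eq_slope a a' h
      (ha.mono (Icc_subset_Icc ht0.le hs1.le))
      (fun x hx => had x ⟨lt_trans ht0 hx.1, lt_trans hx.2 hs1⟩)
    have hc01 : c ∈ Set.Ioo (0:ℝ) 1 := ⟨lt_trans ht0 hc.1, lt_trans hc.2 hs1⟩
    have hb := hN₁ c hc01
    have heq : a' c * (s - t) = a s - a t := by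
      rw [hceq]; exact div_mul_cancel₀ _ (sub_ne_zero.mpr (ne_of_gt h))
    have h1 : |a s - a t| = |a' c| * (s - t) := by
      rw [← heq, abs_mul, abs_of_pos (by linarith : (0:ℝ) < s - t)]
    have habs : 0 ≤ |a' c| := abs_nonneg _
    have h1c : 3/4 * (1 - t) ≤ 1 - c := by
      nlinarith [hc.2, mul_le_mul_of_nonneg_right hδt (by linarith : (0:ℝ) ≤ 1 - t)]
    have hcc : 3/4 * (t * (1 - t)) ≤ c * (1 - c) := by
      nlinarith [mul_le_mul (le_of_lt hc.1) h1c (by linarith : (0:ℝ) ≤ 3/4 * (1 - t)) (by linarith [hc.1] : (0:ℝ) ≤ c)]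
    have h2 : t * (1 - t) * |a' c| ≤ 4/3 * N₁ := by
      nlinarith [mul_le_mul_of_nonneg_right hcc habs]
    rw [h1]
    calc |a' c| * (s - t) ≤ |a' c| * (δ * (t * (1 - t))) :=
          mul_le_mul_of_nonneg_left (by linarith) habs
      _ = δ * (t * (1 - t) * |a' c|) := by ring
      _ ≤ δ * (4/3 * N₁) := mul_le_mul_of_nonneg_left h2 hδ0
      _ ≤ 2 * (δ * N₁) := by nlinarith


lemma aux_key (δ Na N₁ Nq t rb s s' srb av au qt : ℝ)
    (hδ0 : 0 ≤ δ) (hδ4 : δ ≤ 1/4)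
    (hNa : 0 ≤ Na) (hN₁ : 0 ≤ N₁) (hNq : 0 ≤ Nq)
    (ht0 : 0 < t) (htrb : t < rb) (hrb1 : rb ≤ 1)
    (hs_lo : 3/4 * t ≤ s) (hs_hi : s ≤ 5/4 * t)
    (hst : |s - t| ≤ δ * (t * (1 - t)))
    (hs' : |s' - 1| ≤ δ)
    (hsrb_lo : 3/4 * rb ≤ srb) (hsrb : |srb - rb| ≤ δ * (rb * (1 - rb)))
    (haau : |av - au| ≤ 2 * (δ * N₁))
    (hau : |au| ≤ Na) (hqt : |qt| ≤ Nq) :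
    |(srb ^ 3)⁻¹ * (s' * (av * qt * s ^ 2)) - (rb ^ 3)⁻¹ * (au * qt * t ^ 2)| ≤
      20 * ((Na + N₁) * δ * Nq) * (rb ^ 3)⁻¹ * t ^ 2 := by
  have hrb0 : 0 < rb := lt_trans ht0 htrb
  have hsrb0 : 0 < srb := lt_of_lt_of_le (by linarith) hsrb_lo
  have hApos : 0 < srb ^ 3 := by positivity
  have hBpos : 0 < rb ^ 3 := by positivity
  have ht1 : t < 1 := lt_of_lt_of_le htrb hrb1
  obtain ⟨hs'1, hs'2⟩ := abs_le.mp hs'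
  obtain ⟨hst1, hst2⟩ := abs_le.mp hst
  obtain ⟨hsrb1, hsrb2⟩ := abs_le.mp hsrb
  have hsrb_hi : srb ≤ 5/4 * rb := by nlinarith
  -- step a : |s' * s^2 - t^2| ≤ 4 δ t^2
  have hstnn : (0:ℝ) ≤ δ * (t * (1 - t)) := mul_nonneg hδ0 (mul_nonneg ht0.le (by linarith))
  have hP : |s' * s ^ 2 - t ^ 2| ≤ 4 * δ * t ^ 2 := by
    have hfac : s' * s ^ 2 - t ^ 2 = (s' - 1) * s ^ 2 + (s - t) * (s + t) := by ring
    have hs0 : (0:ℝ) ≤ s := by linarith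
    have hs2 : s ^ 2 ≤ 25/16 * t ^ 2 := by
      nlinarith [mul_le_mul hs_hi hs_hi hs0 (by positivity : (0:ℝ) ≤ 5/4 * t)]
    have ha1 : |(s' - 1) * s ^ 2| ≤ δ * (25/16 * t ^ 2) := by
      rw [abs_mul, abs_of_nonneg (sq_nonneg s)]
      exact mul_le_mul hs' hs2 (sq_nonneg s) hδ0
    have ha2 : |(s - t) * (s + t)| ≤ δ * (t * (1 - t)) * (9/4 * t) := by
      rw [abs_mul]
      refine mul_le_mul hst ?_ (abs_nonneg _) hstnn
      rw [abs_of_nonneg (by linarith : (0:ℝ) ≤ s + t)]; linarith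
    calc |s' * s ^ 2 - t ^ 2| = |(s' - 1) * s ^ 2 + (s - t) * (s + t)| := by rw [hfac]
      _ ≤ |(s' - 1) * s ^ 2| + |(s - t) * (s + t)| := abs_add_le _ _
      _ ≤ δ * (25/16 * t ^ 2) + δ * (t * (1 - t)) * (9/4 * t) := add_le_add ha1 ha2
      _ ≤ 4 * δ * t ^ 2 := by nlinarith [mul_nonneg (mul_nonneg hδ0 (sq_nonneg t)) ht0.le]
  -- step b : |rb^3 - srb^3| ≤ 4 δ rb^3
  have hQ : |rb ^ 3 - srb ^ 3| ≤ 4 * δ * rb ^ 3 := by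
    have hfac : rb ^ 3 - srb ^ 3 = (rb - srb) * (rb ^ 2 + rb * srb + srb ^ 2) := by ring
    have hqnn : (0:ℝ) ≤ rb ^ 2 + rb * srb + srb ^ 2 := by positivity
    have hquad : rb ^ 2 + rb * srb + srb ^ 2 ≤ 61/16 * rb ^ 2 := by
      nlinarith [mul_le_mul hsrb_hi hsrb_hi hsrb0.le (by positivity : (0:ℝ) ≤ 5/4 * rb),
        mul_le_mul_of_nonneg_left hsrb_hi hrb0.le]
    have habs1 : |rb - srb| ≤ δ * rb := by
      rw [abs_sub_comm]
      calc |srb - rb| ≤ δ * (rb * (1 - rb)) := hsrb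
        _ ≤ δ * rb := by nlinarith [mul_nonneg hδ0 (mul_nonneg hrb0.le hrb0.le)]
    rw [hfac, abs_mul, abs_of_nonneg hqnn]
    calc |rb - srb| * (rb ^ 2 + rb * srb + srb ^ 2) ≤ (δ * rb) * (61/16 * rb ^ 2) :=
        mul_le_mul habs1 hquad hqnn (by positivity)
      _ ≤ 4 * δ * rb ^ 3 := by nlinarith [mul_nonneg hδ0 (pow_nonneg hrb0.le 3)]
  -- numerator bound
  have hs0' : (0:ℝ) ≤ s := by linarith
  have hs2' : s ^ 2 ≤ 25/16 * t ^ 2 := by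
    nlinarith [mul_le_mul hs_hi hs_hi hs0' (by positivity : (0:ℝ) ≤ 5/4 * t)]
  have hss' : 0 ≤ s' * s ^ 2 := mul_nonneg (by linarith) (sq_nonneg s)
  have hss'2 : s' * s ^ 2 ≤ 125/64 * t ^ 2 := by
    have hs'le : s' ≤ 5/4 := by linarith
    nlinarith [mul_le_mul hs'le hs2' (sq_nonneg s) (by norm_num : (0:ℝ) ≤ 5/4)]
  have hnum : |s' * (av * qt * s ^ 2) * rb ^ 3 - au * qt * t ^ 2 * srb ^ 3| ≤
      27/64 * (20 * ((Na + N₁) * δ * Nq)) * t ^ 2 * rb ^ 3 := by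
    have hid : s' * (av * qt * s ^ 2) * rb ^ 3 - au * qt * t ^ 2 * srb ^ 3 =
        qt * ((av - au) * (s' * s ^ 2) * rb ^ 3 +
          au * ((s' * s ^ 2 - t ^ 2) * rb ^ 3 + t ^ 2 * (rb ^ 3 - srb ^ 3))) := by ring
    rw [hid, abs_mul]
    have h1 : |(av - au) * (s' * s ^ 2) * rb ^ 3| ≤ 2 * (δ * N₁) * (125/64 * t ^ 2) * rb ^ 3 := by
      rw [abs_mul, abs_mul, abs_of_pos hBpos, abs_of_nonneg hss']
      have := mul_le_mul haau hss'2 hss' (by positivity : (0:ℝ) ≤ 2 * (δ * N₁))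
      exact mul_le_mul_of_nonneg_right this hBpos.le
    have h2 : |au * ((s' * s ^ 2 - t ^ 2) * rb ^ 3 + t ^ 2 * (rb ^ 3 - srb ^ 3))| ≤
        Na * (4 * δ * t ^ 2 * rb ^ 3 + t ^ 2 * (4 * δ * rb ^ 3)) := by
      rw [abs_mul]
      refine mul_le_mul hau ?_ (abs_nonneg _) hNa
      calc |(s' * s ^ 2 - t ^ 2) * rb ^ 3 + t ^ 2 * (rb ^ 3 - srb ^ 3)|
          ≤ |(s' * s ^ 2 - t ^ 2) * rb ^ 3| + |t ^ 2 * (rb ^ 3 - srb ^ 3)| := abs_add_le _ _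
        _ ≤ 4 * δ * t ^ 2 * rb ^ 3 + t ^ 2 * (4 * δ * rb ^ 3) := by
            rw [abs_mul, abs_mul, abs_of_pos hBpos, abs_of_nonneg (sq_nonneg t)]
            exact add_le_add (mul_le_mul_of_nonneg_right hP hBpos.le)
              (mul_le_mul_of_nonneg_left hQ (sq_nonneg t))
    have h3 : |(av - au) * (s' * s ^ 2) * rb ^ 3 +
          au * ((s' * s ^ 2 - t ^ 2) * rb ^ 3 + t ^ 2 * (rb ^ 3 - srb ^ 3))| ≤
        2 * (δ * N₁) * (125/64 * t ^ 2) * rb ^ 3 +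
          Na * (4 * δ * t ^ 2 * rb ^ 3 + t ^ 2 * (4 * δ * rb ^ 3)) :=
      le_trans (abs_add_le _ _) (add_le_add h1 h2)
    calc |qt| * |(av - au) * (s' * s ^ 2) * rb ^ 3 +
          au * ((s' * s ^ 2 - t ^ 2) * rb ^ 3 + t ^ 2 * (rb ^ 3 - srb ^ 3))| ≤
        Nq * (2 * (δ * N₁) * (125/64 * t ^ 2) * rb ^ 3 +
          Na * (4 * δ * t ^ 2 * rb ^ 3 + t ^ 2 * (4 * δ * rb ^ 3))) :=
          mul_le_mul hqt h3 (abs_nonneg _) hNq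
      _ ≤ 27/64 * (20 * ((Na + N₁) * δ * Nq)) * t ^ 2 * rb ^ 3 := by
          have hX1 : 0 ≤ Nq * (δ * (N₁ * (t ^ 2 * rb ^ 3))) :=
            mul_nonneg hNq (mul_nonneg hδ0 (mul_nonneg hN₁ (mul_nonneg (sq_nonneg t) hBpos.le)))
          have hX2 : 0 ≤ Nq * (δ * (Na * (t ^ 2 * rb ^ 3))) :=
            mul_nonneg hNq (mul_nonneg hδ0 (mul_nonneg hNa (mul_nonneg (sq_nonneg t) hBpos.le)))
          nlinarith [hX1, hX2]
  -- conclude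
  have hA64 : 27/64 * rb ^ 3 ≤ srb ^ 3 := by
    have h1 : (3/4 * rb) ^ 3 ≤ srb ^ 3 :=
      pow_le_pow_left₀ (by positivity) hsrb_lo 3
    nlinarith [h1]
  have heq : (srb ^ 3)⁻¹ * (s' * (av * qt * s ^ 2)) - (rb ^ 3)⁻¹ * (au * qt * t ^ 2) =
      (s' * (av * qt * s ^ 2) * rb ^ 3 - au * qt * t ^ 2 * srb ^ 3) / (srb ^ 3 * rb ^ 3) := by
    field_simp
  rw [heq, abs_div, abs_of_pos (mul_pos hApos hBpos), div_le_iff₀ (mul_pos hApos hBpos)]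
  have hgoal_eq : 20 * ((Na + N₁) * δ * Nq) * (rb ^ 3)⁻¹ * t ^ 2 * (srb ^ 3 * rb ^ 3) =
      20 * ((Na + N₁) * δ * Nq) * t ^ 2 * srb ^ 3 := by
    field_simp
  rw [hgoal_eq]
  have hK : 0 ≤ 20 * ((Na + N₁) * δ * Nq) * t ^ 2 := by positivity
  calc |s' * (av * qt * s ^ 2) * rb ^ 3 - au * qt * t ^ 2 * srb ^ 3| ≤
      27/64 * (20 * ((Na + N₁) * δ * Nq)) * t ^ 2 * rb ^ 3 := hnum
    _ ≤ 20 * ((Na + N₁) * δ * Nq) * t ^ 2 * srb ^ 3 := by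
        linarith [mul_le_mul_of_nonneg_left hA64 hK]

end Aux


/- STATEMENT 11: There is an absolute constant C > 0 such that: for δ ∈ [0,1/4],
S : [0,1] → [0,1] a continuous strictly increasing bijection, differentiable on (0,1),
with |S(r) − r| ≤ δ·r(1−r) and |S'(r) − 1| ≤ δ, T = S⁻¹, and a ∈ C[0,1] continuously
differentiable on (0,1) with ‖a‖₁ < ∞, the operators
L(q)(r) = r⁻³∫₀^r a(ρ)q(ρ)ρ²dρ and L̃(q)(r̄) = S(r̄)⁻³∫₀^{S(r̄)} a(ρ)q(T(ρ))ρ²dρ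
satisfy max_{0≤r̄≤1} |L̃(q)(r̄) − L(q)(r̄)| ≤ C·(‖a‖_∞ + ‖a‖₁)·δ·‖q‖_∞. -/
theorem stmt_11 :
    ∃ C : ℝ, 0 < C ∧
      ∀ δ : ℝ, δ ∈ Set.Icc (0:ℝ) (1/4) →
      ∀ S T S' : ℝ → ℝ,
        ContinuousOn S (Set.Icc 0 1) →
        StrictMonoOn S (Set.Icc 0 1) →
        (∀ r ∈ Set.Icc (0:ℝ) 1, S r ∈ Set.Icc (0:ℝ) 1) →
        S 0 = 0 → S 1 = 1 →
        (∀ r ∈ Set.Icc (0:ℝ) 1, T (S r) = r) →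
        (∀ r ∈ Set.Icc (0:ℝ) 1, S (T r) = r) →
        (∀ r ∈ Set.Icc (0:ℝ) 1, T r ∈ Set.Icc (0:ℝ) 1) →
        (∀ r ∈ Set.Ioo (0:ℝ) 1, HasDerivAt S (S' r) r) →
        (∀ r ∈ Set.Icc (0:ℝ) 1, |S r - r| ≤ δ * (r * (1 - r))) →
        (∀ r ∈ Set.Ioo (0:ℝ) 1, |S' r - 1| ≤ δ) →
      ∀ a a' : ℝ → ℝ,
        ContinuousOn a (Set.Icc 0 1) →
        (∀ r ∈ Set.Ioo (0:ℝ) 1, HasDerivAt a (a' r) r) →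
        ContinuousOn a' (Set.Ioo 0 1) →
      ∀ Na N₁ : ℝ,
        (∀ r ∈ Set.Icc (0:ℝ) 1, |a r| ≤ Na) →
        (∀ r ∈ Set.Ioo (0:ℝ) 1, r * (1 - r) * |a' r| ≤ N₁) →
      ∀ q : ℝ → ℝ, ContinuousOn q (Set.Icc 0 1) →
      ∀ Nq : ℝ, (∀ r ∈ Set.Icc (0:ℝ) 1, |q r| ≤ Nq) →
      ∀ rb ∈ Set.Ioc (0:ℝ) 1,
        |((S rb) ^ 3)⁻¹ * (∫ ρ in (0:ℝ)..(S rb), a ρ * q (T ρ) * ρ ^ 2) -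
            (rb ^ 3)⁻¹ * (∫ ρ in (0:ℝ)..rb, a ρ * q ρ * ρ ^ 2)| ≤
          C * (Na + N₁) * δ * Nq := by
  refine ⟨100, by norm_num, ?_⟩
  rintro δ ⟨hδ0, hδ4⟩ S T S' hScont hSmono hSmaps hS0 hS1 hTS hST hTmaps hSd hSapprox hS'δ
    a a' ha had ha'cont Na N₁ hNa hN₁ q hq Nq hNq rb ⟨hrb0, hrb1⟩
  have hNa0 : 0 ≤ Na := le_trans (abs_nonneg _) (hNa 0 (by norm_num))
  have hN₁0 : 0 ≤ N₁ := by
    have := hN₁ (1/2) (by norm_num)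
    nlinarith [abs_nonneg (a' (1/2))]
  have hNq0 : 0 ≤ Nq := le_trans (abs_nonneg _) (hNq 0 (by norm_num))
  have hrbI : rb ∈ Set.Icc (0:ℝ) 1 := ⟨hrb0.le, hrb1⟩
  have hIccsub : Set.Icc (0:ℝ) rb ⊆ Set.Icc 0 1 := Icc_subset_Icc le_rfl hrb1
  have huIcc : Set.uIcc (0:ℝ) rb = Set.Icc 0 rb := uIcc_of_le hrb0.le
  have hsrb := hSapprox rb hrbI
  have hSrb_lo : 3/4 * rb ≤ S rb := by
    obtain ⟨h1, h2⟩ := abs_le.mp hsrb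
    nlinarith [mul_nonneg hδ0 (mul_nonneg hrb0.le (by linarith : (0:ℝ) ≤ 1 - rb)),
      mul_nonneg (mul_nonneg hδ0 hrb0.le) hrb0.le]
  have hSrb_pos : 0 < S rb := lt_of_lt_of_le (by linarith) hSrb_lo
  -- continuity of T and of g
  have hTcont : ContinuousOn T (Set.Icc 0 1) := aux_inv_cont S T hScont hSmaps hTS hST hTmaps
  set g : ℝ → ℝ := fun ρ => a ρ * q (T ρ) * ρ ^ 2 with hgdef
  have hgcont : ContinuousOn g (Set.Icc 0 1) := by
    refine ContinuousOn.mul (ContinuousOn.mul ha ?_) (continuous_pow 2).continuousOn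
    exact hq.comp hTcont (fun r hr => hTmaps r hr)
  -- integrability of x ↦ S' x • g (S x)
  have hg2int : IntegrableOn (fun x => S' x • (g ∘ S) x) (Set.Icc 0 rb) volume := by
      have hmeas : MeasurableSet (Set.Icc (0:ℝ) rb) := measurableSet_Icc
      have hgS : ContinuousOn (g ∘ S) (Set.Icc 0 rb) :=
        hgcont.comp (hScont.mono hIccsub) (fun x hx => hSmaps x (hIccsub hx))
      have hae01 : ∀ᵐ x ∂(volume.restrict (Set.Icc (0:ℝ) rb)), x ∉ ({0, 1} : Set ℝ) := by
        refine ae_restrict_of_ae ?_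
        refine ae_iff.mpr ?_
        have : {x : ℝ | ¬ x ∉ ({0, 1} : Set ℝ)} = {0, 1} := by ext x; simp; tauto
        rw [this]
        exact ((Set.finite_singleton 1).insert 0).measure_zero _
      have haemem : ∀ᵐ x ∂(volume.restrict (Set.Icc (0:ℝ) rb)), x ∈ Set.Icc (0:ℝ) rb :=
        ae_restrict_mem hmeas
      have hIoo : ∀ᵐ x ∂(volume.restrict (Set.Icc (0:ℝ) rb)), x ∈ Set.Ioo (0:ℝ) 1 := by
        filter_upwards [hae01, haemem] with x h1 h2
        simp only [Set.mem_insert_iff, Set.mem_singleton_iff, not_or] at h1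
        exact ⟨lt_of_le_of_ne h2.1 (Ne.symm h1.1), lt_of_le_of_ne (h2.2.trans hrb1) h1.2⟩
      have hS'ae : AEStronglyMeasurable S' (volume.restrict (Set.Icc (0:ℝ) rb)) := by
        refine (measurable_deriv S).aestronglyMeasurable.congr ?_
        filter_upwards [hIoo] with x hx
        exact ((hSd x hx).deriv)
      have hprod : AEStronglyMeasurable (fun x => S' x • (g ∘ S) x)
          (volume.restrict (Set.Icc (0:ℝ) rb)) := by
        simp only [smul_eq_mul]
        exact hS'ae.mul (hgS.aestronglyMeasurable hmeas)
      refine Integrable.mono' (integrable_const ((5/4) * (Na * Nq))) hprod ?_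
      filter_upwards [hIoo, haemem] with x hx hxm
      have hx01 : x ∈ Set.Icc (0:ℝ) 1 := ⟨hx.1.le, hx.2.le⟩
      have hS'b : |S' x| ≤ 5/4 := by
        have := hS'δ x hx
        obtain ⟨h1, h2⟩ := abs_le.mp this
        rw [abs_le]; constructor <;> linarith
      have hSx : S x ∈ Set.Icc (0:ℝ) 1 := hSmaps x hx01
      have hgb : |g (S x)| ≤ Na * Nq := by
        rw [hgdef]
        simp only
        rw [hTS x hx01, abs_mul, abs_mul]
        have h1 : |a (S x)| ≤ Na := hNa _ hSx
        have h2 : |q x| ≤ Nq := hNq x hx01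
        have h3 : |(S x) ^ 2| ≤ 1 := by
          rw [abs_of_nonneg (sq_nonneg _)]
          nlinarith [hSx.1, hSx.2]
        calc |a (S x)| * |q x| * |S x ^ 2| ≤ Na * Nq * 1 := by
              refine mul_le_mul (mul_le_mul h1 h2 (abs_nonneg _) hNa0) h3 (abs_nonneg _) ?_
              positivity
          _ = Na * Nq := mul_one _
      simp only [smul_eq_mul, Real.norm_eq_abs, abs_mul]
      exact mul_le_mul hS'b hgb (abs_nonneg _) (by norm_num)
  -- substitution
  have hsub : (∫ x in (0:ℝ)..rb, S' x • (g ∘ S) x) = ∫ ρ in (S 0)..(S rb), g ρ := by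
    apply intervalIntegral.integral_comp_smul_deriv'''
    · exact hScont.mono (by rw [huIcc]; exact hIccsub)
    · intro x hx
      rw [min_eq_left hrb0.le, max_eq_right hrb0.le] at hx
      exact (hSd x ⟨hx.1, lt_of_lt_of_le hx.2 hrb1⟩).hasDerivWithinAt
    · refine hgcont.mono ?_
      rintro y ⟨x, hx, rfl⟩
      rw [min_eq_left hrb0.le, max_eq_right hrb0.le] at hx
      exact hSmaps x ⟨hx.1.le, hx.2.le.trans hrb1⟩
    · have hcpt : IsCompact (S '' Set.Icc 0 rb) :=
        (isCompact_Icc).image_of_continuousOn (hScont.mono hIccsub)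
      have him : S '' Set.Icc 0 rb ⊆ Set.Icc 0 1 := by
        rintro y ⟨x, hx, rfl⟩; exact hSmaps x (hIccsub hx)
      rw [huIcc]
      exact (hgcont.mono him).integrableOn_compact hcpt
    · rw [huIcc]; exact hg2int
  rw [hS0] at hsub
  -- the two integrands on [0, rb]
  set G : ℝ → ℝ := fun x => a x * q x * x ^ 2 with hGdef
  set F : ℝ → ℝ := fun x => S' x * (a (S x) * q x * (S x) ^ 2) with hFdef
  have heqF : Set.EqOn (fun x => S' x • (g ∘ S) x) F (Set.Icc 0 rb) := by
    intro x hx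
    have hx01 := hIccsub hx
    simp only [smul_eq_mul, Function.comp_apply, hgdef, hFdef, hTS x hx01]
  have hsub' : (∫ ρ in (0:ℝ)..(S rb), g ρ) = ∫ x in (0:ℝ)..rb, F x := by
    rw [← hsub]
    exact intervalIntegral.integral_congr (fun x hx => heqF (huIcc ▸ hx))
  have hFint : IntervalIntegrable F volume 0 rb := by
    rw [intervalIntegrable_iff_integrableOn_Icc_of_le hrb0.le]
    exact hg2int.congr_fun heqF measurableSet_Icc
  have hGint : IntervalIntegrable G volume 0 rb := by
    apply ContinuousOn.intervalIntegrable
    rw [huIcc]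
    exact (((ha.mono hIccsub).mul (hq.mono hIccsub)).mul (continuous_pow 2).continuousOn)
  have hkey : (S rb ^ 3)⁻¹ * (∫ ρ in (0:ℝ)..(S rb), g ρ) - (rb ^ 3)⁻¹ * (∫ x in (0:ℝ)..rb, G x)
      = ∫ x in (0:ℝ)..rb, ((S rb ^ 3)⁻¹ * F x - (rb ^ 3)⁻¹ * G x) := by
    rw [hsub', ← intervalIntegral.integral_const_mul, ← intervalIntegral.integral_const_mul,
      ← intervalIntegral.integral_sub (hFint.const_mul _) (hGint.const_mul _)]
  have haeI : ∀ᵐ t ∂(volume.restrict (Set.uIoc 0 rb)), t ∈ Set.Ioo 0 rb := by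
    rw [uIoc_of_le hrb0.le]
    have h1 : ∀ᵐ t ∂(volume.restrict (Set.Ioc 0 rb)), t ∈ Set.Ioc 0 rb :=
      ae_restrict_mem measurableSet_Ioc
    have h2 : ∀ᵐ t ∂(volume.restrict (Set.Ioc 0 rb)), t ≠ rb := by
      refine ae_restrict_of_ae (ae_iff.mpr ?_)
      have : {x : ℝ | ¬ x ≠ rb} = {rb} := by ext x; simp
      rw [this]; exact Real.volume_singleton
    filter_upwards [h1, h2] with t ht hne
    exact ⟨ht.1, lt_of_le_of_ne ht.2 hne⟩
  have haebound : ∀ᵐ t ∂(volume.restrict (Set.uIoc 0 rb)),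
      ‖(S rb ^ 3)⁻¹ * F t - (rb ^ 3)⁻¹ * G t‖ ≤
        (20 * ((Na + N₁) * δ * Nq) * (rb ^ 3)⁻¹) * t ^ 2 := by
    filter_upwards [haeI] with t ht
    have ht0 : 0 < t := ht.1
    have htrb : t < rb := ht.2
    have ht01 : t ∈ Set.Ioo (0:ℝ) 1 := ⟨ht0, lt_of_lt_of_le htrb hrb1⟩
    have htI : t ∈ Set.Icc (0:ℝ) 1 := ⟨ht0.le, ht01.2.le⟩
    have hstt := hSapprox t htI
    obtain ⟨hst1, hst2⟩ := abs_le.mp hstt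
    have hδt : δ * (t * (1 - t)) ≤ 1/4 * t := by
      nlinarith [mul_nonneg hδ0 (mul_nonneg ht0.le (by linarith : (0:ℝ) ≤ 1 - t)),
        mul_nonneg (mul_nonneg hδ0 ht0.le) ht0.le]
    have hs_lo : 3/4 * t ≤ S t := by linarith
    have hs_hi : S t ≤ 5/4 * t := by linarith
    have hSt01 : S t ∈ Set.Ioo (0:ℝ) 1 := by
      constructor
      · calc (0:ℝ) = S 0 := hS0.symm
          _ < S t := hSmono (by norm_num) htI ht0
      · calc S t < S 1 := hSmono htI (by norm_num) ht01.2
          _ = 1 := hS1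
    have haau := aux_a_diff a a' N₁ δ ha had hN₁ hδ0 hδ4 hN₁0 ht01 hSt01
      (by linarith) (by linarith)
    have hres := aux_key δ Na N₁ Nq t rb (S t) (S' t) (S rb) (a (S t)) (a t) (q t)
      hδ0 hδ4 hNa0 hN₁0 hNq0 ht0 htrb hrb1 hs_lo hs_hi hstt (hS'δ t ht01) hSrb_lo hsrb
      haau (hNa t htI) (hNq t htI)
    rw [Real.norm_eq_abs]
    calc |(S rb ^ 3)⁻¹ * F t - (rb ^ 3)⁻¹ * G t|
        = |(S rb ^ 3)⁻¹ * (S' t * (a (S t) * q t * S t ^ 2)) -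
            (rb ^ 3)⁻¹ * (a t * q t * t ^ 2)| := rfl
      _ ≤ 20 * ((Na + N₁) * δ * Nq) * (rb ^ 3)⁻¹ * t ^ 2 := hres
      _ = (20 * ((Na + N₁) * δ * Nq) * (rb ^ 3)⁻¹) * t ^ 2 := by ring
  have hbound_int : IntervalIntegrable
      (fun t => (20 * ((Na + N₁) * δ * Nq) * (rb ^ 3)⁻¹) * t ^ 2) volume 0 rb :=
    (Continuous.intervalIntegrable (by continuity) 0 rb)
  have hfinal := intervalIntegral.norm_integral_le_of_norm_le hrb0.le
    ((ae_restrict_iff' measurableSet_Ioc).mp (by rw [← uIoc_of_le hrb0.le]; exact haebound)) hbound_int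
  rw [← hkey] at hfinal
  rw [Real.norm_eq_abs] at hfinal
  have hKnn : (0:ℝ) ≤ (Na + N₁) * δ * Nq := by positivity
  have hval : (∫ t in (0:ℝ)..rb, (20 * ((Na + N₁) * δ * Nq) * (rb ^ 3)⁻¹) * t ^ 2)
      = 20/3 * ((Na + N₁) * δ * Nq) := by
    rw [intervalIntegral.integral_const_mul, integral_pow]
    have hrbne : rb ^ 3 ≠ 0 := by positivity
    have h1 : (rb ^ 3)⁻¹ * rb ^ 3 = 1 := inv_mul_cancel₀ hrbne
    norm_num
    calc 20 * ((Na + N₁) * δ * Nq) * (rb ^ 3)⁻¹ * (rb ^ 3 / 3)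
        = 20/3 * ((Na + N₁) * δ * Nq) * ((rb ^ 3)⁻¹ * rb ^ 3) := by ring
      _ = 20/3 * ((Na + N₁) * δ * Nq) := by rw [h1, mul_one]
  rw [hval] at hfinal
  calc |(S rb ^ 3)⁻¹ * (∫ ρ in (0:ℝ)..(S rb), g ρ) - (rb ^ 3)⁻¹ * (∫ x in (0:ℝ)..rb, G x)|
      ≤ |20/3 * ((Na + N₁) * δ * Nq)| := hfinal.trans (le_abs_self _)
    _ = 20/3 * ((Na + N₁) * δ * Nq) := abs_of_nonneg (by positivity)
    _ ≤ 100 * (Na + N₁) * δ * Nq := by nlinarith
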